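/- Let g be a symmetric invertible 4×4 real matrix and T : Fin 4 → Fin 4 → Fin 4 → ℝ a tensor antisymmetric in its last two indices (T^α_{βγ} = -T^α_{γβ}). Then the conditions A_{αβγ} := Σ_ν (g_{βν} T^ν_{αγ} - g_{αν} T^ν_{βγ}) + (1/3) g_{βγ} Σ_ν T^ν_{να} - (1/3) g_{αγ} Σ_ν T^ν_{νβ} = 0 for all α, β, γ hold if and only if T^α_{βγ} = (1/3) δ^α_β Σ_ν T^ν_{νγ} - (1/3) δ^α_γ Σ_ν T^ν_{νβ} for all α, β, γ. -/
import Mathlib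


theorem stmt_0 (g : Matrix (Fin 4) (Fin 4) ℝ) (hg : g.IsSymm) (hdet : g.det ≠ 0)
    (T : Fin 4 → Fin 4 → Fin 4 → ℝ)
    (hT : ∀ α β γ, T α β γ = - T α γ β) :
    (∀ α β γ : Fin 4,
      (∑ ν, (g β ν * T ν α γ - g α ν * T ν β γ))
        + (1/3) * g β γ * (∑ ν, T ν ν α) - (1/3) * g α γ * (∑ ν, T ν ν β) = 0)
    ↔ (∀ α β γ : Fin 4,
      T α β γ = (1/3) * (if α = β then (1:ℝ) else 0) * (∑ ν, T ν ν γ)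
        - (1/3) * (if α = γ then (1:ℝ) else 0) * (∑ ν, T ν ν β)) := by
  have hsym : ∀ i j, g i j = g j i := fun i j => (hg.apply i j).symm
  set t : Fin 4 → ℝ := fun γ => ∑ ν, T ν ν γ with ht
  set S : Fin 4 → Fin 4 → Fin 4 → ℝ := fun a b c =>
    T a b c - (1/3) * (if a = b then (1:ℝ) else 0) * t c
      + (1/3) * (if a = c then (1:ℝ) else 0) * t b with hS
  have hSanti : ∀ a b c, S a b c = - S a c b := by
    intro a b c
    simp only [hS]
    rw [hT a b c]
    ring
  -- expansion of ∑ ν, g b ν * S ν a c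
  have hexp : ∀ b a c, (∑ ν, g b ν * S ν a c)
      = (∑ ν, g b ν * T ν a c) - (1/3) * g b a * t c + (1/3) * g b c * t a := by
    intro b a c
    have e1 : ∀ ν : Fin 4, g b ν * S ν a c
        = g b ν * T ν a c - (if ν = a then (1/3) * g b ν * t c else 0)
          + (if ν = c then (1/3) * g b ν * t a else 0) := by
      intro ν
      simp only [hS]
      split_ifs <;> ring
    rw [Finset.sum_congr rfl (fun ν _ => e1 ν), Finset.sum_add_distrib,
      Finset.sum_sub_distrib,
      Finset.sum_ite_eq' Finset.univ a (fun ν => (1/3) * g b ν * t c),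
      Finset.sum_ite_eq' Finset.univ c (fun ν => (1/3) * g b ν * t a)]
    simp only [Finset.mem_univ, if_true]
    try ring
  constructor
  · intro h α β γ
    -- U symmetric in first two indices
    have hU : ∀ b a c, (∑ ν, g b ν * S ν a c) = ∑ ν, g a ν * S ν b c := by
      intro b a c
      have := h a b c
      rw [Finset.sum_sub_distrib] at this
      rw [hexp, hexp, hsym b a]
      simp only [ht] at this ⊢
      linarith
    -- U antisymmetric in last two
    have hUa : ∀ b a c, (∑ ν, g b ν * S ν a c) = - ∑ ν, g b ν * S ν c a := by
      intro b a c
      rw [← Finset.sum_neg_distrib]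
      exact Finset.sum_congr rfl (fun ν _ => by rw [hSanti ν a c]; ring)
    have hUzero : ∀ b a c, (∑ ν, g b ν * S ν a c) = 0 := by
      intro b a c
      have e1 : (∑ ν, g b ν * S ν a c) = - ∑ ν, g b ν * S ν a c := by
        calc (∑ ν, g b ν * S ν a c) = ∑ ν, g a ν * S ν b c := hU b a c
          _ = - ∑ ν, g a ν * S ν c b := hUa a b c
          _ = - ∑ ν, g c ν * S ν a b := by rw [hU a c b]
          _ = ∑ ν, g c ν * S ν b a := by rw [hUa c a b]; try ring
          _ = ∑ ν, g b ν * S ν c a := hU c b a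
          _ = - ∑ ν, g b ν * S ν a c := by rw [hUa b c a]
      linarith
    have hv : (fun ν => S ν β γ) = 0 := by
      apply Matrix.eq_zero_of_mulVec_eq_zero hdet
      ext b
      simpa [Matrix.mulVec, dotProduct] using hUzero b β γ
    have hv0 : S α β γ = 0 := congrFun hv α
    simp only [hS, ht] at hv0
    linarith
  · intro h α β γ
    have z1 : (∑ ν, g β ν * S ν α γ) = 0 := by
      apply Finset.sum_eq_zero; intro ν _
      have : S ν α γ = 0 := by simp only [hS, ht]; rw [h ν α γ]; ring
      rw [this, mul_zero]
    have z2 : (∑ ν, g α ν * S ν β γ) = 0 := by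
      apply Finset.sum_eq_zero; intro ν _
      have : S ν β γ = 0 := by simp only [hS, ht]; rw [h ν β γ]; ring
      rw [this, mul_zero]
    have e1 := hexp β α γ
    have e2 := hexp α β γ
    rw [z1] at e1
    rw [z2] at e2
    rw [Finset.sum_sub_distrib]
    simp only [ht] at e1 e2 ⊢
    rw [hsym β α] at e1
    linarith
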